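/- arXiv:2410.22507 — 5 statements merged into one kernel-verified Lean document; each statement's English description precedes it below -/
import Mathlib

section
/- Let K be a totally real number field, L a totally positive definite quadratic O_K-lattice, and α a totally positive integer not represented by L such that L represents every totally positive integer of norm strictly less than N(α). If β is a totally positive integer with N(β) ≥ N(α) and β is not of the form αε² for a unit ε, then the orthogonal sum L ⊥ ⟨β⟩ does not represent α. -/
open NumberField

def TotReal (K : Type) [Field K] [NumberField K] : Prop :=
  ∀ v : InfinitePlace K, v.IsReal

def TPos {K : Type} [Field K] [NumberField K] (a : 𝓞 K) : Prop :=
  ∀ φ : K →+* ℝ, 0 < φ (a : K)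

noncomputable def Nm {K : Type} [Field K] [NumberField K] (a : 𝓞 K) : ℤ :=
  Algebra.norm ℤ a

structure QLat (K : Type) [Field K] [NumberField K] where
  carrier : Type
  [isAddCommGroup : AddCommGroup carrier]
  [isModule : Module (𝓞 K) carrier]
  [isFinite : Module.Finite (𝓞 K) carrier]
  [isTorsionFree : NoZeroSMulDivisors (𝓞 K) carrier]
  Q : QuadraticForm (𝓞 K) carrier

attribute [instance] QLat.isAddCommGroup QLat.isModule QLat.isFinite QLat.isTorsionFree

def QLat.PosDef {K : Type} [Field K] [NumberField K] (L : QLat K) : Prop :=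
  ∀ v : L.carrier, v ≠ 0 → TPos (L.Q v)

def QLat.Rep {K : Type} [Field K] [NumberField K] (L : QLat K) (a : 𝓞 K) : Prop :=
  ∃ v : L.carrier, L.Q v = a

section Aux

variable {K : Type} [Field K] [NumberField K]

/-- For totally real `K`, real and complex embeddings biject. -/
noncomputable def realEmbEquiv (hK : TotReal K) : (K →+* ℝ) ≃ (K →+* ℂ) where
  toFun ψ := Complex.ofRealHom.comp ψ
  invFun σ := (NumberField.InfinitePlace.isReal_mk_iff.mp
    (hK (NumberField.InfinitePlace.mk σ))).embedding
  left_inv ψ := by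
    ext x
    simp [ComplexEmbedding.IsReal.embedding]
  right_inv σ := by
    ext x
    exact ComplexEmbedding.IsReal.coe_embedding_apply _ x

lemma nm_prod (hK : TotReal K) (a : 𝓞 K) :
    ((Nm a : ℤ) : ℝ) = ∏ φ : K →+* ℝ, φ (a : K) := by
  apply Complex.ofReal_injective
  have h1 : (algebraMap ℚ ℂ) (Algebra.norm ℚ (a : K)) = ∏ σ : K →ₐ[ℚ] ℂ, σ (a : K) :=
    Algebra.norm_eq_prod_embeddings ℚ ℂ _
  calc ((((Nm a : ℤ) : ℝ)) : ℂ)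
      = (algebraMap ℚ ℂ) (Algebra.norm ℚ (a : K)) := by
        rw [Nm, ← Algebra.coe_norm_int]; push_cast; rfl
    _ = ∏ σ : K →ₐ[ℚ] ℂ, σ (a : K) := h1
    _ = ∏ σ : K →+* ℂ, σ (a : K) := by
        exact (Fintype.prod_equiv (RingHom.equivRatAlgHom K ℂ) (fun σ => σ (a : K))
          (fun σ => σ (a : K)) (fun σ => rfl)).symm
    _ = ∏ φ : K →+* ℝ, ((φ (a : K) : ℂ)) := by
        exact (Fintype.prod_equiv (realEmbEquiv hK) (fun φ => ((φ (a : K) : ℂ)))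
          (fun σ => σ (a : K)) (fun φ => by simp [realEmbEquiv])).symm
    _ = (((∏ φ : K →+* ℝ, φ (a : K)) : ℝ) : ℂ) := by
        rw [Complex.ofReal_prod]

lemma nm_pos (hK : TotReal K) {a : 𝓞 K} (ha : TPos a) : 0 < Nm a := by
  have h : (0 : ℝ) < ((Nm a : ℤ) : ℝ) := by
    rw [nm_prod hK a]
    exact Finset.prod_pos fun φ _ => ha φ
  exact_mod_cast h

lemma nm_lt (hK : TotReal K) {a b : 𝓞 K} (hb : TPos b)
    (h : ∀ φ : K →+* ℝ, φ (b : K) < φ (a : K)) : Nm b < Nm a := by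
  haveI : Nonempty (K →+* ℝ) := ⟨(realEmbEquiv hK).symm (Classical.arbitrary _)⟩
  have key : ((Nm b : ℤ) : ℝ) < ((Nm a : ℤ) : ℝ) := by
    rw [nm_prod hK a, nm_prod hK b]
    exact Finset.prod_lt_prod_of_nonempty (fun φ _ => hb φ) (fun φ _ => h φ)
      Finset.univ_nonempty
  exact_mod_cast key

lemma nm_ne_zero {a : 𝓞 K} (ha : a ≠ 0) : Nm a ≠ 0 := by
  have h : ((Nm a : ℤ) : ℚ) ≠ 0 := by
    rw [Nm, Algebra.coe_norm_int]
    rw [Algebra.norm_ne_zero_iff]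
    simpa using ha
  exact_mod_cast h

lemma nm_mul_sq (b x : 𝓞 K) : Nm (b * x ^ 2) = Nm b * Nm x ^ 2 := by
  simp only [Nm, map_mul, map_pow]

lemma isUnit_of_nm_abs_one {x : 𝓞 K} (h : |Nm x| = 1) : IsUnit x := by
  have h' : |Algebra.norm ℤ x| = 1 := h
  rw [NumberField.isUnit_iff_norm, RingOfIntegers.coe_norm, ← Algebra.coe_norm_int]
  exact_mod_cast h'

end Aux

/-- If `L` has $S$-truant $α$ (represents all totally positive integers of
smaller norm, not $α$), and $β$ is totally positive of norm $≥ N(α)$ not of the form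
$αε²$, then $L ⊥ ⟨β⟩$ does not represent $α$. -/
theorem stmt0 {K : Type} [Field K] [NumberField K] (hK : TotReal K)
    (L : QLat K) (hpos : L.PosDef)
    (α : 𝓞 K) (hα : TPos α) (hnotrep : ¬ L.Rep α)
    (hbelow : ∀ γ : 𝓞 K, TPos γ → Nm γ < Nm α → L.Rep γ)
    (β : 𝓞 K) (hβ : TPos β) (hNβ : Nm α ≤ Nm β)
    (hne : ¬ ∃ ε : (𝓞 K)ˣ, β = α * (ε : 𝓞 K) ^ 2) :
    ¬ ∃ (v : L.carrier) (x : 𝓞 K), L.Q v + β * x ^ 2 = α := by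
  rintro ⟨v, x, hvx⟩
  by_cases hx : x = 0
  · subst hx
    apply hnotrep
    exact ⟨v, by simpa using hvx⟩
  · have hNx : Nm x ≠ 0 := nm_ne_zero hx
    have hNx1 : 1 ≤ Nm x ^ 2 := by nlinarith [sq_nonneg (Nm x), Int.one_le_abs hNx, abs_nonneg (Nm x), sq_abs (Nm x)]
    have hxK : (x : K) ≠ 0 := by
      intro h
      exact hx (RingOfIntegers.coe_eq_zero_iff.mp h)
    have hTβx : TPos (β * x ^ 2) := by
      intro φ
      have h1 : 0 < φ (β : K) := hβ φ
      have h2 : φ (x : K) ≠ 0 := fun h => hxK (by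
        exact (map_eq_zero φ).mp h)
      have : ((β * x ^ 2 : 𝓞 K) : K) = (β : K) * (x : K) ^ 2 := by push_cast; ring
      rw [this, map_mul, map_pow]
      positivity
    have hNβx : Nm α ≤ Nm (β * x ^ 2) := by
      rw [nm_mul_sq]
      calc Nm α ≤ Nm β := hNβ
        _ = Nm β * 1 := by ring
        _ ≤ Nm β * Nm x ^ 2 := by
            have : 0 < Nm β := nm_pos hK hβ
            nlinarith
    by_cases hv : v = 0
    · -- α = β * x ^ 2, so x is a unit and β = α ε²
      have hQ0 : L.Q v = 0 := by rw [hv]; exact QuadraticMap.map_zero L.Q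
      have hβxα : β * x ^ 2 = α := by rw [hQ0, zero_add] at hvx; exact hvx
      have heq : Nm α = Nm β * Nm x ^ 2 := by rw [← hβxα, nm_mul_sq]
      have hβpos : 0 < Nm β := nm_pos hK hβ
      have hsq1 : Nm x ^ 2 = 1 := by nlinarith [nm_mul_sq β x]
      have habs : |Nm x| = 1 := by nlinarith [sq_abs (Nm x), abs_nonneg (Nm x)]
      obtain ⟨u, hu⟩ := isUnit_of_nm_abs_one habs
      apply hne
      refine ⟨u⁻¹, ?_⟩
      have : α * ((u⁻¹ : (𝓞 K)ˣ) : 𝓞 K) ^ 2 = (β * (u : 𝓞 K) ^ 2) * ((u⁻¹ : (𝓞 K)ˣ) : 𝓞 K) ^ 2 := by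
        rw [hu, hβxα]
      rw [this]
      have huu : (u : 𝓞 K) * ((u⁻¹ : (𝓞 K)ˣ) : 𝓞 K) = 1 := by
        rw [← Units.val_mul, mul_inv_cancel, Units.val_one]
      calc β = β * ((u : 𝓞 K) * ((u⁻¹ : (𝓞 K)ˣ) : 𝓞 K)) ^ 2 := by rw [huu]; ring
        _ = β * (u : 𝓞 K) ^ 2 * ((u⁻¹ : (𝓞 K)ˣ) : 𝓞 K) ^ 2 := by ring
    · -- strict inequality contradiction
      have hQv : TPos (L.Q v) := hpos v hv
      have hlt : Nm (β * x ^ 2) < Nm α := by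
        apply nm_lt hK hTβx
        intro φ
        have h1 : 0 < φ ((L.Q v : 𝓞 K) : K) := hQv φ
        have hsum : φ ((L.Q v : 𝓞 K) : K) + φ ((β * x ^ 2 : 𝓞 K) : K) = φ (α : K) := by
          rw [← map_add, ← hvx]; push_cast; ring_nf
        linarith
      omega
end

section
/- Let K be a totally real number field and β ∈ O_K⁺ a squarefree indecomposable totally positive integer. Let α₁, …, α_k be representatives of all classes in O_K⁺/U_K² of norm strictly less than N(β). Then the diagonal lattice ⟨α₁, …, α_k⟩ represents every totally positive integer of norm less than N(β), but does not represent β. -/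
open NumberField

/-- for a squarefree indecomposable $β$, the diagonal lattice on
representatives of all classes of norm $< N(β)$ represents every totally positive
integer of norm $< N(β)$ but not $β$. -/
theorem stmt4 {K : Type} [Field K] [NumberField K] (hK : TotReal K)
    (β : 𝓞 K) (hβ : TPos β)
    (hsf : ∀ ω : 𝓞 K, ω ^ 2 ∣ β → IsUnit ω)
    (hind : ¬ ∃ γ δ : 𝓞 K, TPos γ ∧ TPos δ ∧ β = γ + δ)
    (k : ℕ) (α : Fin k → 𝓞 K)
    (hαpos : ∀ i, TPos (α i))
    (hαn : ∀ i, Nm (α i) < Nm β)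
    (hreprs : ∀ γ : 𝓞 K, TPos γ → Nm γ < Nm β →
      ∃ i, ∃ ε : (𝓞 K)ˣ, γ = α i * (ε : 𝓞 K) ^ 2) :
    (∀ γ : 𝓞 K, TPos γ → Nm γ < Nm β →
      ∃ x : Fin k → 𝓞 K, ∑ i, α i * (x i) ^ 2 = γ) ∧
    ¬ ∃ x : Fin k → 𝓞 K, ∑ i, α i * (x i) ^ 2 = β := by
  constructor
  · intro γ hγ hn
    obtain ⟨i, ε, hγeq⟩ := hreprs γ hγ hn
    refine ⟨fun j => if j = i then (ε : 𝓞 K) else 0, ?_⟩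
    rw [Finset.sum_eq_single i]
    · simp [hγeq]
    · intro j _ hj; simp [hj]
    · simp
  · rintro ⟨x, hx⟩
    have hφ0 : Nonempty (K →+* ℝ) := by
      have v : InfinitePlace K := Classical.arbitrary _
      exact ⟨NumberField.InfinitePlace.embedding_of_isReal (hK v)⟩
    obtain ⟨φ₀⟩ := hφ0
    have hterm : ∀ (φ : K →+* ℝ) j, 0 ≤ φ ((α j : K) * (x j : K) ^ 2) := by
      intro φ j
      have := hαpos j φ
      rw [map_mul, map_pow]
      positivity
    have htermpos : ∀ (φ : K →+* ℝ) j, x j ≠ 0 → 0 < φ ((α j : K) * (x j : K) ^ 2) := by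
      intro φ j hj
      have h1 := hαpos j φ
      have h2 : φ (x j : K) ≠ 0 := by
        simp only [ne_eq, map_eq_zero]
        exact_mod_cast hj
      rw [map_mul, map_pow]
      positivity
    have hcast : ∀ (s : Finset (Fin k)) (φ : K →+* ℝ),
        φ ((↑(∑ j ∈ s, α j * x j ^ 2) : K)) = ∑ j ∈ s, φ ((α j : K) * (x j : K) ^ 2) := by
      intro s φ
      push_cast
      rw [map_sum]
    by_cases hS : ∃ i, x i ≠ 0
    · obtain ⟨i, hi⟩ := hS
      by_cases h2 : ∃ j, j ≠ i ∧ x j ≠ 0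
      · obtain ⟨j, hji, hj⟩ := h2
        apply hind
        refine ⟨α i * x i ^ 2, ∑ j ∈ Finset.univ.erase i, α j * x j ^ 2, ?_, ?_, ?_⟩
        · intro φ
          have h := htermpos φ i hi
          have hc : ((α i * x i ^ 2 : 𝓞 K) : K) = (α i : K) * (x i : K) ^ 2 := by
            push_cast; ring
          rw [hc]; exact h
        · intro φ
          rw [hcast]
          refine Finset.sum_pos' (fun l _ => hterm φ l) ⟨j, ?_, htermpos φ j hj⟩
          simp [hji]
        · rw [← hx, ← Finset.add_sum_erase _ _ (Finset.mem_univ i)]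
      · push_neg at h2
        have hβeq : β = α i * x i ^ 2 := by
          rw [← hx, Finset.sum_eq_single i]
          · intro j _ hj
            rw [h2 j hj]; ring
          · simp
        have hu : IsUnit (x i) := hsf (x i) ⟨α i, by rw [hβeq]; ring⟩
        have hun : IsUnit (Nm (x i)) := hu.map (Algebra.norm ℤ)
        have hNm : Nm β = Nm (α i) * Nm (x i) ^ 2 := by
          rw [hβeq]; unfold Nm; rw [map_mul, map_pow]
        rcases Int.isUnit_iff.mp hun with h | h <;>
          · rw [h] at hNm
            have := hαn i
            omega
    · push_neg at hS
      have : β = 0 := by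
        rw [← hx]
        exact Finset.sum_eq_zero fun j _ => by rw [hS j]; ring
      rw [this] at hβ
      have h0 := hβ φ₀
      simp at h0
end

section
/- Let K be a totally real number field in which the only decompositions of 2 as a sum of totally positive integers is 2 = 1 + 1 (which holds in every totally real field). If 2 is squarefree in O_K, and α₁, …, α_n are representatives of all squarefree classes in O_K⁺/U_K² of norm less than N(2) = 2^[K:ℚ], then the diagonal lattice D = ⟨α₁, …, α_n⟩ represents every totally positive integer of norm less than N(2) but does not represent 2. -/
open NumberField

/-- $a$ is squarefree in $\mathcal O_K$. -/
def Sqfree {K : Type} [Field K] [NumberField K] (a : 𝓞 K) : Prop :=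
  ∀ ω : 𝓞 K, ω ^ 2 ∣ a → IsUnit ω

section Aux

variable {K : Type} [Field K] [NumberField K]

lemma Nm_mul (a b : 𝓞 K) : Nm (a * b) = Nm a * Nm b := map_mul (Algebra.norm ℤ) a b

lemma Nm_sq (a : 𝓞 K) : Nm (a ^ 2) = Nm a ^ 2 := map_pow (Algebra.norm ℤ) a 2

lemma Nm_ne_zero {x : 𝓞 K} (hx : x ≠ 0) : Nm x ≠ 0 := by
  simpa [Nm] using (Algebra.norm_ne_zero_iff (R := ℤ) (S := 𝓞 K)).mpr hx

lemma Nm_sq_of_unit (u : (𝓞 K)ˣ) : Nm ((u : 𝓞 K)) ^ 2 = 1 := by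
  have : IsUnit (Nm (u : 𝓞 K)) := u.isUnit.map (Algebra.norm ℤ (S := 𝓞 K))
  rcases Int.isUnit_iff.mp this with h | h <;> rw [h] <;> ring

lemma two_le_natAbs_Nm {x : 𝓞 K} (hx : x ≠ 0) (hu : ¬ IsUnit x) : 2 ≤ (Nm x).natAbs := by
  by_contra h
  push_neg at h
  interval_cases hn : (Nm x).natAbs
  · exact Nm_ne_zero hx (Int.natAbs_eq_zero.mp hn)
  · apply hu
    rw [← Ideal.span_singleton_eq_top]
    rw [← Ideal.absNorm_eq_one_iff, Ideal.absNorm_span_singleton]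
    exact hn

/-- squarefree decomposition by strong induction on the norm -/
lemma sqfree_decomp : ∀ (m : ℕ) (γ : 𝓞 K), (Nm γ).natAbs ≤ m → γ ≠ 0 →
    ∃ β ξ : 𝓞 K, ξ ≠ 0 ∧ γ = β * ξ ^ 2 ∧ Sqfree β := by
  intro m
  induction m with
  | zero =>
    intro γ hm h0
    exact absurd (Int.natAbs_eq_zero.mp (Nat.le_zero.mp hm)) (Nm_ne_zero h0)
  | succ m ih =>
    intro γ hm h0
    by_cases hsf : Sqfree γ
    · exact ⟨γ, 1, one_ne_zero, by ring, hsf⟩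
    · simp only [Sqfree] at hsf
      push_neg at hsf
      obtain ⟨ω, hωdvd, hωu⟩ := hsf
      obtain ⟨γ', hγ'⟩ := hωdvd
      have hω0 : ω ≠ 0 := by
        rintro rfl
        simp at hγ'
        exact h0 hγ'
      have hγ'0 : γ' ≠ 0 := by
        rintro rfl
        simp at hγ'
        exact h0 hγ'
      have hnorm : (Nm γ).natAbs = (Nm ω).natAbs ^ 2 * (Nm γ').natAbs := by
        rw [hγ', Nm_mul, Nm_sq, Int.natAbs_mul, Int.natAbs_pow]
      have hω2 : 2 ≤ (Nm ω).natAbs := two_le_natAbs_Nm hω0 hωu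
      have hγ'1 : 1 ≤ (Nm γ').natAbs := Nat.one_le_iff_ne_zero.mpr
        (Int.natAbs_ne_zero.mpr (Nm_ne_zero hγ'0))
      have h4 : 4 ≤ (Nm ω).natAbs ^ 2 := by nlinarith
      have h5 : 4 * (Nm γ').natAbs ≤ (Nm ω).natAbs ^ 2 * (Nm γ').natAbs :=
        Nat.mul_le_mul_right _ h4
      have hlt : (Nm γ').natAbs ≤ m := by omega
      obtain ⟨β, ξ, hξ0, hdec, hβ⟩ := ih γ' hlt hγ'0
      exact ⟨β, ω * ξ, mul_ne_zero hω0 hξ0, by rw [hγ', hdec]; ring, hβ⟩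

lemma tpos_sum {ι : Type*} (g : ι → 𝓞 K) (T : Finset ι) (hT : T.Nonempty)
    (h : ∀ i ∈ T, TPos (g i)) : TPos (∑ i ∈ T, g i) := by
  intro φ
  have : φ ((∑ i ∈ T, g i : 𝓞 K) : K) = ∑ i ∈ T, φ ((g i : K)) := by
    show (φ.comp (algebraMap (𝓞 K) K)) (∑ i ∈ T, g i) = _
    rw [map_sum]
    rfl
  rw [this]
  exact Finset.sum_pos (fun i hi => h i hi φ) hT

lemma tpos_add {a b : 𝓞 K} (ha : TPos a) (hb : TPos b) : TPos (a + b) := by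
  intro φ
  have : φ ((a + b : 𝓞 K) : K) = φ (a : K) + φ (b : K) := by push_cast; rw [map_add]
  rw [this]
  exact add_pos (ha φ) (hb φ)

lemma tpos_one : TPos (1 : 𝓞 K) := by
  intro φ
  simp

lemma not_tpos_zero (hK : TotReal K) : ¬ TPos (0 : 𝓞 K) := by
  intro h
  have v : InfinitePlace K := Classical.arbitrary _
  have φ := InfinitePlace.embedding_of_isReal (hK v)
  have := h φ
  simp at this

lemma tpos_mul_sq {a x : 𝓞 K} (ha : TPos a) (hx : x ≠ 0) : TPos (a * x ^ 2) := by
  intro φ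
  have : φ ((a * x ^ 2 : 𝓞 K) : K) = φ (a : K) * φ (x : K) ^ 2 := by
    push_cast; rw [map_mul, map_pow]
  rw [this]
  have hxK : (x : K) ≠ 0 := by
    simpa using (RingOfIntegers.coe_eq_zero_iff (K := K)).not.mpr hx
  have : φ (x : K) ≠ 0 := by simpa using hxK
  exact mul_pos (ha φ) (pow_two_pos_of_ne_zero this)

end Aux

/-- if $2$ is squarefree, the diagonal lattice on representatives of all
squarefree classes of norm $< N(2)=2^{[K:ℚ]}$ represents all totally positive integers of
norm $< N(2)$ but not $2$. -/
theorem stmt5 {K : Type} [Field K] [NumberField K] (hK : TotReal K)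
    (hdec : ∀ γ δ : 𝓞 K, TPos γ → TPos δ → γ + δ = 2 → γ = 1 ∧ δ = 1)
    (hsf2 : Sqfree (2 : 𝓞 K))
    (n : ℕ) (α : Fin n → 𝓞 K)
    (hαpos : ∀ i, TPos (α i))
    (hαsf : ∀ i, Sqfree (α i))
    (hαn : ∀ i, Nm (α i) < Nm (2 : 𝓞 K))
    (hreprs : ∀ γ : 𝓞 K, TPos γ → Sqfree γ → Nm γ < Nm (2 : 𝓞 K) →
      ∃ i, ∃ ε : (𝓞 K)ˣ, γ = α i * (ε : 𝓞 K) ^ 2)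
    (hinj : ∀ i j, (∃ ε : (𝓞 K)ˣ, α j = α i * (ε : 𝓞 K) ^ 2) → i = j) :
    Nm (2 : 𝓞 K) = 2 ^ (Module.finrank ℚ K) ∧
    (∀ γ : 𝓞 K, TPos γ → Nm γ < Nm (2 : 𝓞 K) →
      ∃ x : Fin n → 𝓞 K, ∑ i, α i * (x i) ^ 2 = γ) ∧
    ¬ ∃ x : Fin n → 𝓞 K, ∑ i, α i * (x i) ^ 2 = 2 := by
  have hnorm2 : Nm (2 : 𝓞 K) = 2 ^ (Module.finrank ℚ K) := by
    have h2 : (2 : 𝓞 K) = algebraMap ℤ (𝓞 K) 2 := by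
      rw [map_ofNat]
    rw [Nm, h2, Algebra.norm_algebraMap_of_basis (Module.Free.chooseBasis ℤ (𝓞 K)),
      ← Module.finrank_eq_card_chooseBasisIndex, RingOfIntegers.rank]
  refine ⟨hnorm2, ?_, ?_⟩
  · -- represents all totally positive of small norm
    intro γ hγpos hγn
    have hγ0 : γ ≠ 0 := by
      rintro rfl
      exact not_tpos_zero hK hγpos
    obtain ⟨β, ξ, hξ0, hdecomp, hβsf⟩ :=
      sqfree_decomp (Nm γ).natAbs γ le_rfl hγ0
    have hβ0 : β ≠ 0 := by
      rintro rfl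
      simp at hdecomp
      exact hγ0 hdecomp
    have hβpos : TPos β := by
      intro φ
      have hγφ := hγpos φ
      have hcast : φ ((γ : 𝓞 K) : K) = φ (β : K) * φ (ξ : K) ^ 2 := by
        rw [hdecomp]; push_cast; rw [map_mul, map_pow]
      rw [hcast] at hγφ
      have hxK : (ξ : K) ≠ 0 := (RingOfIntegers.coe_eq_zero_iff (K := K)).not.mpr hξ0
      have hφξ : φ (ξ : K) ≠ 0 := by simpa using hxK
      nlinarith [pow_two_pos_of_ne_zero hφξ, sq_nonneg (φ (ξ : K))]
    have hβn : Nm β < Nm (2 : 𝓞 K) := by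
      by_contra hle
      push_neg at hle
      have h2pos : (0 : ℤ) < Nm (2 : 𝓞 K) := by
        rw [hnorm2]; positivity
      have hβnp : 0 < Nm β := lt_of_lt_of_le h2pos hle
      have hξn : 1 ≤ Nm ξ ^ 2 := by
        have h := Nm_ne_zero hξ0
        rcases h.lt_or_gt with h | h <;> nlinarith
      have : Nm γ = Nm β * Nm ξ ^ 2 := by rw [hdecomp, Nm_mul, Nm_sq]
      nlinarith
    obtain ⟨i, ε, hβ⟩ := hreprs β hβpos hβsf hβn
    refine ⟨fun j => if j = i then (ε : 𝓞 K) * ξ else 0, ?_⟩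
    rw [Finset.sum_eq_single_of_mem i (Finset.mem_univ i)
      (fun j _ hj => by simp [hj])]
    simp only [eq_self_iff_true, if_true]
    rw [hdecomp, hβ]; ring
  · -- does not represent 2
    rintro ⟨x, hx⟩
    classical
    set f : Fin n → 𝓞 K := fun i => α i * x i ^ 2 with hf
    set S : Finset (Fin n) := Finset.univ.filter (fun i => x i ≠ 0) with hS
    have hsum : ∑ i ∈ S, f i = 2 := by
      rw [← hx, hS]
      apply Finset.sum_filter_of_ne
      intro i _ h
      intro hxi
      exact h (by rw [hf]; simp [hxi])
    have hfpos : ∀ i ∈ S, TPos (f i) := by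
      intro i hi
      have hxi : x i ≠ 0 := by
        rw [hS] at hi
        exact (Finset.mem_filter.mp hi).2
      exact tpos_mul_sq (hαpos i) hxi
    rcases S.eq_empty_or_nonempty with hSe | ⟨i, hi⟩
    · rw [hSe, Finset.sum_empty] at hsum
      exact two_ne_zero (α := 𝓞 K) hsum.symm
    · have hsplit : f i + ∑ j ∈ S.erase i, f j = 2 := by
        rw [Finset.add_sum_erase S f hi, hsum]
      rcases (S.erase i).eq_empty_or_nonempty with hEe | ⟨j, hj⟩
      · -- singleton: f i = 2
        rw [hEe, Finset.sum_empty, add_zero] at hsplit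
        simp only [hf] at hsplit
        have hxdvd : (x i) ^ 2 ∣ (2 : 𝓞 K) := ⟨α i, by rw [← hsplit]; ring⟩
        have hxu : IsUnit (x i) := hsf2 (x i) hxdvd
        obtain ⟨u, hu⟩ := hxu
        have : Nm (2 : 𝓞 K) = Nm (α i) := by
          rw [← hsplit, Nm_mul, Nm_sq, ← hu, Nm_sq_of_unit, mul_one]
        exact absurd (hαn i) (by rw [this]; exact lt_irrefl _)
      · have hji : j ≠ i := Finset.ne_of_mem_erase hj
        have hjS : j ∈ S := Finset.mem_of_mem_erase hj
        rcases ((S.erase i).erase j).eq_empty_or_nonempty with hTe | hTne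
        · -- exactly two terms
          have hEj : S.erase i = {j} := by
            rcases (Finset.erase_eq_empty_iff _ _).mp hTe with h | h
            · exact absurd h (Finset.nonempty_iff_ne_empty.mp ⟨j, hj⟩)
            · exact h
          rw [hEj, Finset.sum_singleton] at hsplit
          obtain ⟨hfi1, hfj1⟩ := hdec (f i) (f j) (hfpos i hi) (hfpos j hjS) hsplit
          -- f i = 1, f j = 1 give units
          have hxiu : IsUnit (x i) := isUnit_of_dvd_one
            (dvd_trans (dvd_pow_self (x i) two_ne_zero) ⟨α i, by rw [← hfi1]; ring⟩)
          have hxju : IsUnit (x j) := isUnit_of_dvd_one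
            (dvd_trans (dvd_pow_self (x j) two_ne_zero) ⟨α j, by rw [← hfj1]; ring⟩)
          obtain ⟨u, hu⟩ := hxiu
          obtain ⟨v, hv⟩ := hxju
          have h1 : α i * (u : 𝓞 K) ^ 2 = 1 := by rw [hu]; exact hfi1
          have h2 : α j * (v : 𝓞 K) ^ 2 = 1 := by rw [hv]; exact hfj1
          have key : α j = α i * ((u * v⁻¹ : (𝓞 K)ˣ) : 𝓞 K) ^ 2 := by
            have hvv : (v : 𝓞 K) * ((v⁻¹ : (𝓞 K)ˣ) : 𝓞 K) = 1 := v.mul_inv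
            calc α j = α j * ((v : 𝓞 K) * ((v⁻¹ : (𝓞 K)ˣ) : 𝓞 K)) ^ 2 := by
                  rw [hvv]; ring
              _ = (α j * (v : 𝓞 K) ^ 2) * ((v⁻¹ : (𝓞 K)ˣ) : 𝓞 K) ^ 2 := by ring
              _ = (α i * (u : 𝓞 K) ^ 2) * ((v⁻¹ : (𝓞 K)ˣ) : 𝓞 K) ^ 2 := by rw [h1, h2]
              _ = α i * ((u : 𝓞 K) * ((v⁻¹ : (𝓞 K)ˣ) : 𝓞 K)) ^ 2 := by ring
              _ = α i * ((u * v⁻¹ : (𝓞 K)ˣ) : 𝓞 K) ^ 2 := by rw [Units.val_mul]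
          exact hji (hinj i j ⟨u * v⁻¹, key⟩).symm
        · -- at least three terms
          set T := (S.erase i).erase j with hT
          have hrest : TPos (∑ k ∈ T, f k) := by
            apply tpos_sum f T hTne
            intro k hk
            exact hfpos k (Finset.mem_of_mem_erase (Finset.mem_of_mem_erase hk))
          have hsplit2 : f i + (f j + ∑ k ∈ T, f k) = 2 := by
            rw [Finset.add_sum_erase _ f hj]
            exact hsplit
          obtain ⟨_, hone⟩ := hdec (f i) (f j + ∑ k ∈ T, f k) (hfpos i hi)
            (tpos_add (hfpos j hjS) hrest) hsplit2
          have hsplit3 : f j + ((∑ k ∈ T, f k) + 1) = 2 := by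
            rw [← add_assoc, hone]; norm_num
          obtain ⟨_, hzero⟩ := hdec (f j) ((∑ k ∈ T, f k) + 1) (hfpos j hjS)
            (tpos_add hrest tpos_one) hsplit3
          have : (∑ k ∈ T, f k) = 0 := by
            linear_combination hzero
          exact not_tpos_zero hK (this ▸ hrest)
end

section
/- Let m be a positive integer and K a totally real number field in which every prime dividing m is inert. If m = αω² with α, ω ∈ O_K, then there exists a unit ε ∈ U_K such that εω ∈ ℤ. -/
open NumberField

/-- A divisor of a product of primes is associated to a subproduct. -/
theorem aux_dvd_prod_primes {R : Type*} [CommMonoidWithZero R] [IsCancelMulZero R]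
    (s : Multiset R) : ∀ a : R, (∀ p ∈ s, Prime p) → a ∣ s.prod →
    ∃ t : Multiset R, t ≤ s ∧ Associated t.prod a := by
  induction s using Multiset.induction with
  | empty =>
    intro a _ ha
    simp only [Multiset.prod_zero] at ha
    exact ⟨0, le_refl _, by simpa using (associated_one_iff_isUnit.2 (isUnit_of_dvd_one ha)).symm⟩
  | cons p s ih =>
    intro a hprime ha
    have hp : Prime p := hprime p (Multiset.mem_cons_self p s)
    have hs : ∀ q ∈ s, Prime q := fun q hq => hprime q (Multiset.mem_cons_of_mem hq)
    obtain ⟨b, hb⟩ := ha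
    rw [Multiset.prod_cons] at hb
    have hpab : p ∣ a * b := ⟨s.prod, hb.symm⟩
    rcases hp.dvd_or_dvd hpab with h1 | h1
    · obtain ⟨a', rfl⟩ := h1
      have hcancel : s.prod = a' * b := by
        apply mul_left_cancel₀ hp.ne_zero
        rw [hb, mul_assoc]
      obtain ⟨t, ht, hassoc⟩ := ih a' hs ⟨b, hcancel⟩
      exact ⟨p ::ₘ t, Multiset.cons_le_cons p ht, by
        rw [Multiset.prod_cons]; exact (Associated.refl p).mul_mul hassoc⟩
    · obtain ⟨b', rfl⟩ := h1
      have hcancel : s.prod = a * b' := by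
        apply mul_left_cancel₀ hp.ne_zero
        rw [hb, mul_left_comm]
      obtain ⟨t, ht, hassoc⟩ := ih a hs ⟨b', hcancel⟩
      exact ⟨t, le_trans ht (Multiset.le_cons_self s p), hassoc⟩

theorem aux_prod_nat_cast {R : Type*} [CommSemiring R] (t : Multiset R)
    (h : ∀ x ∈ t, ∃ n : ℕ, x = (n : R)) : ∃ n : ℕ, t.prod = (n : R) := by
  induction t using Multiset.induction with
  | empty => exact ⟨1, by simp⟩
  | cons a t ih =>
    obtain ⟨n, hn⟩ := h a (Multiset.mem_cons_self a t)
    obtain ⟨n', hn'⟩ := ih (fun x hx => h x (Multiset.mem_cons_of_mem hx))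
    exact ⟨n * n', by rw [Multiset.prod_cons, hn, hn', Nat.cast_mul]⟩

/-- if every prime dividing $m$ is inert in $K$ and $m = αω²$, then
$εω ∈ ℤ$ for some unit $ε$. -/
theorem stmt7 {K : Type} [Field K] [NumberField K] (hK : TotReal K)
    (m : ℕ) (hm : 0 < m)
    (hinert : ∀ p : ℕ, p.Prime → p ∣ m → Prime ((p : 𝓞 K)))
    (α ω : 𝓞 K) (h : (m : 𝓞 K) = α * ω ^ 2) :
    ∃ ε : (𝓞 K)ˣ, ∃ z : ℤ, (ε : 𝓞 K) * ω = (z : 𝓞 K) := by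
  classical
  set s : Multiset (𝓞 K) :=
    Multiset.map (Nat.cast : ℕ → 𝓞 K) (m.primeFactorsList : Multiset ℕ) with hs
  have hsprod : s.prod = (m : 𝓞 K) := by
    rw [hs, ← Nat.cast_multiset_prod]
    rw [Multiset.prod_coe, Nat.prod_primeFactorsList hm.ne']
  have hωdvd : ω ∣ s.prod := by
    rw [hsprod, h]
    exact ⟨α * ω, by ring⟩
  have hsprime : ∀ q ∈ s, Prime q := by
    intro q hq
    rw [hs] at hq
    obtain ⟨p, hp, rfl⟩ := Multiset.mem_map.1 hq
    rw [Multiset.mem_coe] at hp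
    exact hinert p (Nat.prime_of_mem_primeFactorsList hp)
      (Nat.dvd_of_mem_primeFactorsList hp)
  obtain ⟨t, hts, u, hu⟩ := aux_dvd_prod_primes s ω hsprime hωdvd
  obtain ⟨n, hn⟩ := aux_prod_nat_cast t (by
    intro x hx
    have := Multiset.mem_of_le hts hx
    rw [hs] at this
    obtain ⟨p, _, rfl⟩ := Multiset.mem_map.1 this
    exact ⟨p, rfl⟩)
  refine ⟨u⁻¹, (n : ℤ), ?_⟩
  rw [← hu, hn]
  push_cast
  rw [mul_comm, mul_assoc]
  simp
end

section
/- Let K be a totally real number field, S ⊆ O_K⁺/U_K², and α an S-critical element, i.e., there is a totally positive definite quadratic O_K-lattice L representing all of S ∖ {α} but not α. Then for every ideal class of K there is a lattice L′ with the same properties (representing S ∖ {α} but not α) whose Steinitz class lies in that ideal class; in particular there is a free lattice with these properties. -/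
open NumberField nonZeroDivisors

/-- $b$ lies in the class of $a$ modulo squares of units. -/
def SRel {K : Type} [Field K] [NumberField K] (a b : 𝓞 K) : Prop :=
  ∃ ε : (𝓞 K)ˣ, b = a * (ε : 𝓞 K) ^ 2

/-- The Steinitz class of the lattice $L$ is $c$: its underlying module is isomorphic to
$\mathcal O_K^k ⊕ \mathfrak a$ for a nonzero ideal $\mathfrak a$ of class $c$. -/
def QLat.HasSteinitz {K : Type} [Field K] [NumberField K]
    (L : QLat K) (c : ClassGroup (𝓞 K)) : Prop :=
  ∃ (k : ℕ) (I : (Ideal (𝓞 K))⁰), ClassGroup.mk0 I = c ∧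
    Nonempty (L.carrier ≃ₗ[𝓞 K] ((Fin k → 𝓞 K) × ↥(I : Ideal (𝓞 K))))



section Dedekind

variable {R : Type*} [CommRing R] [IsDomain R]

/-- Multiplication by a nonzero `b`, as a linear map `I →ₗ span{b} * I`. -/
noncomputable def mulSpanMap (b : R) (I : Ideal R) :
    ↥I →ₗ[R] ↥(Ideal.span {b} * I) where
  toFun := fun x => ⟨b * (x : R), Ideal.mem_span_singleton_mul.mpr ⟨x, x.2, rfl⟩⟩
  map_add' := fun x y => Subtype.ext (by simp [mul_add])
  map_smul' := fun r x => Subtype.ext (by simp [smul_eq_mul, mul_left_comm])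

/-- Multiplication by a nonzero `b` as an equiv `I ≃ span{b} * I`. -/
noncomputable def mulSpanEquiv (b : R) (hb : b ≠ 0) (I : Ideal R) :
    ↥I ≃ₗ[R] ↥(Ideal.span {b} * I) := by
  refine LinearEquiv.ofBijective (mulSpanMap b I) ⟨?_, ?_⟩
  · intro x y hxy
    have : b * (x : R) = b * (y : R) := congrArg Subtype.val hxy
    exact Subtype.ext (mul_left_cancel₀ hb this)
  · rintro ⟨z, hz⟩
    obtain ⟨w, hw, hbw⟩ := Ideal.mem_span_singleton_mul.mp hz
    exact ⟨⟨w, hw⟩, Subtype.ext hbw⟩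

@[simp] lemma mulSpanEquiv_apply_coe (b : R) (hb : b ≠ 0) (I : Ideal R) (x : ↥I) :
    ((mulSpanEquiv b hb I x : ↥(Ideal.span {b} * I)) : R) = b * x := rfl

/-- `R ≃ span {d}` for `d ≠ 0`. -/
noncomputable def spanSingletonEquiv (d : R) (hd : d ≠ 0) :
    R ≃ₗ[R] ↥(Ideal.span ({d} : Set R)) :=
  Submodule.topEquiv.symm ≪≫ₗ mulSpanEquiv d hd ⊤ ≪≫ₗ
    LinearEquiv.ofEq _ _ (by rw [Ideal.mul_top])

@[simp] lemma spanSingletonEquiv_apply_coe (d : R) (hd : d ≠ 0) (r : R) :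
    ((spanSingletonEquiv d hd r : ↥(Ideal.span ({d} : Set R))) : R) = d * r := rfl

variable [IsDedekindDomain R]

/-- Every surjection onto a nonzero ideal of a Dedekind domain splits. -/
theorem exists_section {M : Type*} [AddCommGroup M] [Module R M]
    {I : Ideal R} (hI : I ≠ ⊥) (f : M →ₗ[R] ↥I) (hf : Function.Surjective f) :
    ∃ s : ↥I →ₗ[R] M, ∀ x, f (s x) = x := by
  obtain ⟨d, hdI, hd0⟩ := Submodule.exists_mem_ne_zero_of_ne_bot hI
  obtain ⟨J, hJ⟩ : I ∣ Ideal.span {d} := Ideal.dvd_span_singleton.mpr hdI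
  have hd_mem : d ∈ I * J := by
    rw [← hJ]; exact Ideal.mem_span_singleton_self d
  have key : ∃ (ι : Type) (_ : Fintype ι) (a : ι → ↥I) (ℓ : ι → (↥I →ₗ[R] R)),
      ∀ x : ↥I, d * (∑ i, ℓ i x * (a i : R)) = d * (x : R) := by
    have main : ∀ t ∈ I * J, ∃ (ι : Type) (_ : Fintype ι) (a : ι → ↥I)
        (ℓ : ι → (↥I →ₗ[R] R)), ∀ x : ↥I, d * (∑ i, ℓ i x * (a i : R)) = t * (x : R) := by
      intro t ht
      refine Submodule.mul_induction_on ht ?_ ?_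
      · intro p hp q hq
        have hmem : ∀ x : ↥I, q * (x : R) ∈ Ideal.span ({d} : Set R) := by
          intro x
          rw [hJ, mul_comm q (x : R)]
          exact Ideal.mul_mem_mul x.2 hq
        set mulq : ↥I →ₗ[R] ↥(Ideal.span ({d} : Set R)) :=
          { toFun := fun x => ⟨q * (x : R), hmem x⟩
            map_add' := fun x y => Subtype.ext (by simp [mul_add])
            map_smul' := fun r x => Subtype.ext (by simp [smul_eq_mul, mul_left_comm]) }
          with hmulq
        set ℓ : ↥I →ₗ[R] R := ((spanSingletonEquiv d hd0).symm : _ →ₗ[R] R) ∘ₗ mulq with hℓ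
        have hdl : ∀ x : ↥I, d * ℓ x = q * (x : R) := by
          intro x
          have h2 := congrArg (Subtype.val)
            ((spanSingletonEquiv d hd0).apply_symm_apply (mulq x))
          rw [spanSingletonEquiv_apply_coe] at h2
          exact h2
        refine ⟨Fin 1, inferInstance, fun _ => ⟨p, hp⟩, fun _ => ℓ, ?_⟩
        intro x
        simp only [Fin.sum_univ_one]
        calc d * (ℓ x * p) = (d * ℓ x) * p := by ring
          _ = q * (x : R) * p := by rw [hdl]
          _ = p * q * (x : R) := by ring
      · rintro t₁ t₂ ⟨ι₁, f₁, a₁, ℓ₁, h₁⟩ ⟨ι₂, f₂, a₂, ℓ₂, h₂⟩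
        refine ⟨ι₁ ⊕ ι₂, inferInstance, Sum.elim a₁ a₂, Sum.elim ℓ₁ ℓ₂, fun x => ?_⟩
        rw [Fintype.sum_sum_type]
        simp only [Sum.elim_inl, Sum.elim_inr]
        rw [mul_add, h₁ x, h₂ x, add_mul]
    exact main d hd_mem
  obtain ⟨ι, _, a, ℓ, h⟩ := key
  have hsum : ∀ x : ↥I, (∑ i, ℓ i x * (a i : R)) = (x : R) :=
    fun x => mul_left_cancel₀ hd0 (h x)
  choose m hm using fun i => hf (a i)
  refine ⟨∑ i, (ℓ i).smulRight (m i), fun x => ?_⟩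
  have hx : (∑ i, (ℓ i).smulRight (m i)) x = ∑ i, ℓ i x • m i := by
    simp [LinearMap.sum_apply]
  rw [hx, map_sum]
  simp only [map_smul]
  refine Subtype.ext ?_
  calc ((∑ i, ℓ i x • f (m i) : ↥I) : R) = ∑ i, ℓ i x * ((f (m i) : R)) := by
        push_cast; simp [smul_eq_mul]
    _ = ∑ i, ℓ i x * (a i : R) := by simp [hm]
    _ = x := hsum x

end Dedekind

section Dedekind2
variable {R : Type*} [CommRing R] [IsDomain R]

/-- For coprime ideals, `I × J ≃ R × I*J`. -/
theorem coprimeProdEquiv {I J : Ideal R} (h : I ⊔ J = ⊤) :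
    Nonempty ((↥I × ↥J) ≃ₗ[R] R × ↥(I * J)) := by
  have h1 : (1 : R) ∈ I ⊔ J := by rw [h]; trivial
  obtain ⟨x, hx, y, hy, hxy⟩ := Submodule.mem_sup.mp h1
  exact ⟨
  { toFun := fun p => (↑p.1 + ↑p.2,
      ⟨x * ↑p.2 - y * ↑p.1, sub_mem (Ideal.mul_mem_mul hx p.2.2)
        (by rw [mul_comm y (p.1 : R)]; exact Ideal.mul_mem_mul p.1.2 hy)⟩)
    map_add' := fun p q => by
      refine Prod.ext ?_ (Subtype.ext ?_) <;>
        simp only [Prod.fst_add, Prod.snd_add, Submodule.coe_add] <;>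
        ring
    map_smul' := fun r p => by
      refine Prod.ext ?_ (Subtype.ext ?_) <;>
        simp only [Prod.smul_fst, Prod.smul_snd, Submodule.coe_smul, SetLike.val_smul,
          smul_eq_mul, RingHom.id_apply] <;>
        ring
    invFun := fun p => (⟨x * p.1 - ↑p.2,
        sub_mem (Ideal.mul_mem_right _ _ hx) (Ideal.mul_le_left p.2.2)⟩,
      ⟨y * p.1 + ↑p.2, add_mem (Ideal.mul_mem_right _ _ hy) (Ideal.mul_le_right p.2.2)⟩)
    left_inv := fun p => by
      refine Prod.ext (Subtype.ext ?_) (Subtype.ext ?_)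
      · show x * (↑p.1 + ↑p.2) - (x * ↑p.2 - y * ↑p.1) = (p.1 : R)
        linear_combination (p.1 : R) * hxy
      · show y * (↑p.1 + ↑p.2) + (x * ↑p.2 - y * ↑p.1) = (p.2 : R)
        linear_combination (p.2 : R) * hxy
    right_inv := fun p => by
      refine Prod.ext ?_ (Subtype.ext ?_)
      · show (x * p.1 - ↑p.2) + (y * p.1 + ↑p.2) = p.1
        linear_combination p.1 * hxy
      · show x * (y * p.1 + ↑p.2) - y * (x * p.1 - ↑p.2) = (p.2 : R)
        linear_combination (p.2 : R) * hxy }⟩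

variable [IsDedekindDomain R]

open UniqueFactorizationMonoid in
/-- In a Dedekind domain one can replace `I` by an ideal in the same class coprime to `J`. -/
theorem exists_coprime_class_rep (I J : Ideal R) (hI : I ≠ ⊥) (hJ : J ≠ ⊥) :
    ∃ (I' : Ideal R) (a b : R), a ≠ 0 ∧ b ≠ 0 ∧
      Ideal.span {a} * I = Ideal.span {b} * I' ∧ I' ⊔ J = ⊤ := by
  classical
  by_cases hJtop : J = ⊤
  · exact ⟨I, 1, 1, one_ne_zero, one_ne_zero, rfl, by rw [hJtop, sup_top_eq]⟩
  obtain ⟨b, hbI, hb0⟩ := Submodule.exists_mem_ne_zero_of_ne_bot hI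
  obtain ⟨C, hC⟩ : I ∣ Ideal.span {b} := Ideal.dvd_span_singleton.mpr hbI
  have hspanb : Ideal.span ({b} : Set R) ≠ ⊥ := by
    simpa [Ideal.span_singleton_eq_bot] using hb0
  have hC0 : C ≠ ⊥ := by
    rintro rfl; exact hspanb (hC.trans (Ideal.mul_eq_bot.mpr (Or.inr rfl)))
  have hC0' : C ≠ 0 := by simpa using hC0
  have hCJ0 : C * J ≠ ⊥ := by
    rw [Ne, Ideal.mul_eq_bot]; tauto
  have hCJtop : C * J ≠ ⊤ := by
    intro htop
    exact hJtop (top_le_iff.mp (htop ▸ Ideal.mul_le_right (I := C) (J := J)))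
  set s : Finset (Ideal R) := (normalizedFactors (C * J)).toFinset with hs
  have hsprime : ∀ P ∈ s, Prime P := fun P hP =>
    prime_of_normalized_factor P (Multiset.mem_toFinset.mp hP)
  have hsne : ∀ P ∈ s, P ≠ ⊥ := fun P hP => by simpa using (hsprime P hP).ne_zero
  have hsnetop : ∀ P ∈ s, P ≠ ⊤ := fun P hP h => (hsprime P hP).not_unit (by
    rw [h, ← Ideal.one_eq_top]; exact isUnit_one)
  set v : Ideal R → ℕ := fun P => (normalizedFactors C).count P with hv
  have hcex : ∀ P ∈ s, ∃ c, c ∈ P ^ (v P) ∧ c ∉ P ^ (v P + 1) := fun P hP =>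
    Ideal.exists_mem_pow_notMem_pow_succ P (hsne P hP) (hsnetop P hP) (v P)
  choose c hc1 hc2 using hcex
  obtain ⟨y, hy⟩ := IsDedekindDomain.exists_forall_sub_mem_ideal (s := s) id
      (fun P => v P + 1) (fun P hP => hsprime P hP) (fun _ _ _ _ h => h)
      (fun P => c P.1 P.2)
  have hymem : ∀ P (hP : P ∈ s), y ∈ P ^ (v P) := by
    intro P hP
    have h1 : y - c P hP ∈ P ^ (v P) :=
      Ideal.pow_le_pow_right (Nat.le_succ _) (hy P hP)
    simpa using add_mem h1 (hc1 P hP)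
  have hynot : ∀ P (hP : P ∈ s), y ∉ P ^ (v P + 1) := by
    intro P hP hcon
    exact hc2 P hP (by simpa using sub_mem hcon (hy P hP))
  obtain ⟨P₀, hP₀⟩ : ∃ P, P ∈ s := by
    obtain ⟨P, hPmax, hle⟩ := Ideal.exists_le_maximal (C * J) hCJtop
    exact ⟨P, Multiset.mem_toFinset.mpr
      ((Ideal.mem_normalizedFactors_iff hCJ0).mpr ⟨hPmax.isPrime, hle⟩)⟩
  have hy0 : y ≠ 0 := fun h => hynot P₀ hP₀ (h ▸ zero_mem _)
  have hsub : (normalizedFactors C).toFinset ⊆ s := by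
    intro P hP
    rw [Multiset.mem_toFinset] at hP ⊢
    have h1 := (Ideal.mem_normalizedFactors_iff hC0).mp hP
    exact (Ideal.mem_normalizedFactors_iff hCJ0).mpr
      ⟨h1.1, le_trans Ideal.mul_le_left h1.2⟩
  have hCfact : (∏ P ∈ (normalizedFactors C).toFinset, P ^ (v P)) = C := by
    calc (∏ P ∈ (normalizedFactors C).toFinset, P ^ v P)
        = ((normalizedFactors C).map id).prod := by
          rw [Finset.prod_multiset_map_count]; simp [hv]
      _ = (normalizedFactors C).prod := by rw [Multiset.map_id]
      _ = C := associated_iff_eq.mp (prod_normalizedFactors hC0')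
  have hCdvd : C ∣ Ideal.span {y} := by
    rw [← hCfact]
    refine Finset.prod_dvd_of_coprime ?_ ?_
    · intro P hP Q hQ hPQ
      have hPs := hsub hP
      have hQs := hsub hQ
      have hPm : P.IsMaximal :=
        (Ideal.isPrime_of_prime (hsprime P hPs)).isMaximal (hsne P hPs)
      have hQm : Q.IsMaximal :=
        (Ideal.isPrime_of_prime (hsprime Q hQs)).isMaximal (hsne Q hQs)
      exact (Ideal.isCoprime_iff_sup_eq.mpr (hPm.coprime_of_ne hQm hPQ)).pow
    · intro P hP
      rw [Ideal.dvd_span_singleton]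
      exact hymem P (hsub hP)
  obtain ⟨I', hI'⟩ := hCdvd
  refine ⟨I', y, b, hy0, hb0, ?_, ?_⟩
  · rw [hI', hC]; ring
  · by_contra hne
    obtain ⟨P, hPmax, hle⟩ := Ideal.exists_le_maximal _ hne
    have hJP : J ≤ P := le_trans le_sup_right hle
    have hI'P : I' ≤ P := le_trans le_sup_left hle
    have hPs : P ∈ s := Multiset.mem_toFinset.mpr
      ((Ideal.mem_normalizedFactors_iff hCJ0).mpr
        ⟨hPmax.isPrime, le_trans Ideal.mul_le_right hJP⟩)
    have h1 : P ^ (v P) ∣ C := by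
      have h2 : Multiset.replicate (v P) P ≤ normalizedFactors C :=
        Multiset.le_count_iff_replicate_le.mp le_rfl
      have h3 := Multiset.prod_dvd_prod_of_le h2
      rw [Multiset.prod_replicate] at h3
      exact h3.trans (associated_iff_eq.mp (prod_normalizedFactors hC0')).dvd
    have h2 : P ^ (v P + 1) ∣ C * I' := by
      rw [pow_succ]
      exact mul_dvd_mul h1 (Ideal.dvd_iff_le.mpr hI'P)
    rw [← hI'] at h2
    exact hynot P hPs (Ideal.dvd_span_singleton.mp h2)

/-- Steinitz pair lemma: `I × J ≃ R × I*J` for nonzero ideals in a Dedekind domain. -/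
theorem prod_equiv_mul (I J : Ideal R) (hI : I ≠ ⊥) (hJ : J ≠ ⊥) :
    Nonempty ((↥I × ↥J) ≃ₗ[R] R × ↥(I * J)) := by
  obtain ⟨I', a, b, ha0, hb0, heq, hcop⟩ := exists_coprime_class_rep I J hI hJ
  have e1 : ↥I ≃ₗ[R] ↥I' :=
    (mulSpanEquiv a ha0 I) ≪≫ₗ LinearEquiv.ofEq _ _ heq ≪≫ₗ (mulSpanEquiv b hb0 I').symm
  have heq2 : Ideal.span {a} * (I * J) = Ideal.span {b} * (I' * J) := by
    rw [← mul_assoc, heq, mul_assoc]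
  have e2 : ↥(I' * J) ≃ₗ[R] ↥(I * J) :=
    (mulSpanEquiv b hb0 (I' * J)) ≪≫ₗ LinearEquiv.ofEq _ _ heq2.symm ≪≫ₗ
      (mulSpanEquiv a ha0 (I * J)).symm
  obtain ⟨ec⟩ := coprimeProdEquiv hcop
  exact ⟨(e1.prodCongr (LinearEquiv.refl R ↥J)) ≪≫ₗ ec ≪≫ₗ
    (LinearEquiv.refl R R).prodCongr e2⟩

end Dedekind2

section Structure
variable {R : Type*} [CommRing R] [IsDomain R]

/-- `M` has a Steinitz decomposition. -/
def IsGood (R M : Type*) [CommRing R] [AddCommGroup M] [Module R M] : Prop :=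
  Subsingleton M ∨ ∃ (k : ℕ) (I : Ideal R), I ≠ ⊥ ∧ Nonempty (M ≃ₗ[R] (Fin k → R) × ↥I)

theorem isGood_congr {M N : Type*} [AddCommGroup M] [Module R M] [AddCommGroup N]
    [Module R N] (e : M ≃ₗ[R] N) (h : IsGood R M) : IsGood R N := by
  rcases h with h | ⟨k, I, hI, ⟨e'⟩⟩
  · left; haveI := h; exact e.symm.toEquiv.subsingleton
  · exact Or.inr ⟨k, I, hI, ⟨e.symm ≪≫ₗ e'⟩⟩

/-- Prod with a subsingleton module. -/
def prodSubsingletonEquiv {A B : Type*} [AddCommMonoid A] [Module R A] [Subsingleton A]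
    [AddCommMonoid B] [Module R B] : (A × B) ≃ₗ[R] B where
  toFun := Prod.snd
  map_add' := fun _ _ => rfl
  map_smul' := fun _ _ => rfl
  invFun := fun b => (0, b)
  left_inv := fun p => Prod.ext (Subsingleton.elim _ _) rfl
  right_inv := fun _ => rfl

noncomputable def finSuccArrowEquiv (k : ℕ) : ((Fin k → R) × R) ≃ₗ[R] (Fin (k + 1) → R) :=
  (LinearEquiv.prodCongr (LinearEquiv.refl R (Fin k → R)) (LinearEquiv.funUnique (Fin 1) R R).symm)
    ≪≫ₗ (LinearEquiv.sumArrowLequivProdArrow (Fin k) (Fin 1) R R).symm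
    ≪≫ₗ (LinearEquiv.piCongrLeft' R (fun _ : Fin k ⊕ Fin 1 => R) finSumFinEquiv :
          ((Fin k ⊕ Fin 1) → R) ≃ₗ[R] (Fin (k + 1) → R))

variable [IsDedekindDomain R]

set_option synthInstance.maxHeartbeats 1000000 in
set_option maxHeartbeats 1600000 in
theorem isGood_submodule_pi : ∀ (n : ℕ) (N : Submodule R (Fin n → R)), IsGood R ↥N := by
  intro n
  induction n with
  | zero =>
    intro N
    exact Or.inl ⟨fun a b => Subtype.ext (Subsingleton.elim _ _)⟩
  | succ n ih =>
    intro N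
    set π : ↥N →ₗ[R] R := (LinearMap.proj (Fin.last n)).comp N.subtype with hπ
    set T : ↥N →ₗ[R] (Fin n → R) := (LinearMap.funLeft R R Fin.castSucc).comp N.subtype with hT
    have hTapp : ∀ (v : ↥N) (j : Fin n), T v j = (v : Fin (n + 1) → R) (Fin.castSucc j) :=
      fun v j => rfl
    have hπapp : ∀ v : ↥N, π v = (v : Fin (n + 1) → R) (Fin.last n) := fun v => rfl
    by_cases hI : LinearMap.range π = ⊥
    · -- last coordinate vanishes identically
      have hπ0 : ∀ v : ↥N, π v = 0 := fun v => by
        have hmem : π v ∈ LinearMap.range π := ⟨v, rfl⟩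
        rwa [hI, Submodule.mem_bot] at hmem
      have hTinj : Function.Injective T := by
        intro u w huw
        apply Subtype.ext; funext i
        refine Fin.lastCases ?_ ?_ i
        · rw [← hπapp, ← hπapp, hπ0, hπ0]
        · intro j
          rw [← hTapp, ← hTapp, huw]
      exact isGood_congr (LinearEquiv.ofInjective T hTinj).symm (ih _)
    · have hsurj : Function.Surjective π.rangeRestrict := LinearMap.surjective_rangeRestrict π
      obtain ⟨s, hs⟩ := exists_section hI π.rangeRestrict hsurj
      set Kk : Submodule R ↥N := LinearMap.ker π.rangeRestrict with hKk
      have eN : ↥N ≃ₗ[R] (↥Kk × ↥(LinearMap.range π)) :=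
        { toFun := fun v => (⟨v - s (π.rangeRestrict v), by
              rw [hKk, LinearMap.mem_ker, map_sub, hs, sub_self]⟩, π.rangeRestrict v)
          map_add' := fun u w => by
            refine Prod.ext (Subtype.ext ?_) ?_ <;>
              simp only [map_add, Submodule.coe_add, Prod.fst_add, Prod.snd_add] <;> abel
          map_smul' := fun c u => by
            refine Prod.ext (Subtype.ext ?_) ?_ <;>
              simp only [map_smul, Submodule.coe_smul, SetLike.val_smul, RingHom.id_apply,
                Prod.smul_fst, Prod.smul_snd, smul_sub]
          invFun := fun p => (p.1 : ↥N) + s p.2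
          left_inv := fun v => by simp
          right_inv := fun p => by
            have hker : π.rangeRestrict (p.1 : ↥N) = 0 := LinearMap.mem_ker.mp p.1.2
            refine Prod.ext (Subtype.ext ?_) ?_ <;>
              simp [map_add, hker, hs] }
      have hKinj : Function.Injective (T.comp Kk.subtype) := by
        intro u w huw
        have hlast : π (u : ↥N) = π (w : ↥N) := by
          have h1 : π.rangeRestrict (u : ↥N) = 0 := LinearMap.mem_ker.mp u.2
          have h2 : π.rangeRestrict (w : ↥N) = 0 := LinearMap.mem_ker.mp w.2
          have h1' := congrArg Subtype.val h1
          have h2' := congrArg Subtype.val h2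
          rw [show ∀ v : ↥N, (π.rangeRestrict v : R) = π v from fun _ => rfl] at h1' h2'
          rw [h1', h2']
        apply Subtype.ext; apply Subtype.ext; funext i
        refine Fin.lastCases ?_ ?_ i
        · rw [← hπapp, ← hπapp, hlast]
        · intro j
          rw [← hTapp, ← hTapp]
          exact congrFun huw j
      have hKgood : IsGood R ↥Kk :=
        isGood_congr (LinearEquiv.ofInjective _ hKinj).symm (ih _)
      rcases hKgood with hsub | ⟨k, J, hJ, ⟨eK⟩⟩
      · haveI := hsub
        exact Or.inr ⟨0, LinearMap.range π, hI, ⟨eN ≪≫ₗ prodSubsingletonEquiv ≪≫ₗ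
          (prodSubsingletonEquiv (A := Fin 0 → R) (B := ↥(LinearMap.range π))).symm⟩⟩
      · obtain ⟨eB⟩ := prod_equiv_mul J (LinearMap.range π) hJ hI
        refine Or.inr ⟨k + 1, J * LinearMap.range π, ?_, ⟨?_⟩⟩
        · rw [Ne, Ideal.mul_eq_bot]; tauto
        · exact eN ≪≫ₗ (eK.prodCongr (LinearEquiv.refl R _)) ≪≫ₗ
            LinearEquiv.prodAssoc R _ _ _ ≪≫ₗ
            ((LinearEquiv.refl R (Fin k → R)).prodCongr eB) ≪≫ₗ
            (LinearEquiv.prodAssoc R (Fin k → R) R ↥(J * LinearMap.range π)).symm ≪≫ₗ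
            ((finSuccArrowEquiv k).prodCongr (LinearEquiv.refl R _))

theorem isGood_of_fg (M : Type*) [AddCommGroup M] [Module R M] [Module.Finite R M]
    [NoZeroSMulDivisors R M] : IsGood R M := by
  classical
  obtain ⟨g, vv, hspan⟩ := Module.Finite.exists_fin (R := R) (M := M)
  obtain ⟨Iset, li, hmax⟩ := exists_maximal_linearIndepOn R vv
  have hchoice : ∀ i : Fin g, ∃ a : R, a ≠ 0 ∧ a • vv i ∈ Submodule.span R (vv '' Iset) := by
    intro i
    by_cases hi : i ∈ Iset
    · exact ⟨1, one_ne_zero, by rw [one_smul]; exact Submodule.subset_span ⟨i, hi, rfl⟩⟩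
    · exact hmax i hi
  choose aa ha0 hamem using hchoice
  set r : R := ∏ i, aa i with hr
  have hr0 : r ≠ 0 := Finset.prod_ne_zero_iff.mpr (fun i _ => ha0 i)
  set W : Submodule R M := Submodule.span R (vv '' Iset) with hW
  have hrW : ∀ m : M, r • m ∈ W := by
    intro m
    have hm : m ∈ Submodule.span R (Set.range vv) := by rw [hspan]; trivial
    induction hm using Submodule.span_induction with
    | mem x hx =>
      obtain ⟨i, rfl⟩ := hx
      have hsplit : r = (∏ j ∈ Finset.univ.erase i, aa j) * aa i := by
        rw [hr, ← Finset.prod_erase_mul Finset.univ aa (Finset.mem_univ i)]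
      rw [hsplit, mul_smul]
      exact Submodule.smul_mem _ _ (hamem i)
    | zero => rw [smul_zero]; exact zero_mem _
    | add u w _ _ hu hw => rw [smul_add]; exact add_mem hu hw
    | smul c u _ hu => rw [smul_comm]; exact Submodule.smul_mem _ _ hu
  set ψ : M →ₗ[R] ↥W :=
    { toFun := fun m => ⟨r • m, hrW m⟩
      map_add' := fun u w => Subtype.ext (by simp [smul_add])
      map_smul' := fun c u => Subtype.ext (by simp [smul_comm r c u]) } with hψ
  have hψinj : Function.Injective ψ := by
    intro u w h
    have h1 : r • u = r • w := congrArg Subtype.val h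
    exact smul_right_injective M hr0 h1
  haveI : Fintype ↥Iset := (Set.toFinite Iset).fintype
  set bW : Module.Basis ↥Iset R ↥(Submodule.span R (Set.range fun x : ↥Iset => vv ↑x)) :=
    Module.Basis.span li with hbW
  have eW : ↥W ≃ₗ[R] (Fin (Fintype.card ↥Iset) → R) :=
    (LinearEquiv.ofEq _ _ (by rw [hW, Set.image_eq_range])) ≪≫ₗ bW.equivFun ≪≫ₗ
      (LinearEquiv.piCongrLeft' R (fun _ : ↥Iset => R) (Fintype.equivFin ↥Iset) :
        (↥Iset → R) ≃ₗ[R] (Fin (Fintype.card ↥Iset) → R))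
  have hfinj : Function.Injective (eW.toLinearMap ∘ₗ ψ) := by
    intro u w h
    exact hψinj (eW.injective h)
  exact isGood_congr (LinearEquiv.ofInjective _ hfinj).symm
    (isGood_submodule_pi _ (LinearMap.range (eW.toLinearMap ∘ₗ ψ)))

section NF
variable {K : Type} [Field K] [NumberField K]

/-- For a nonzero algebraic integer in a totally real field, some real embedding
has `|φ x| ≥ 1`. -/
theorem exists_embedding_sq_ge_one (hK : TotReal K) (x : 𝓞 K) (hx : x ≠ 0) :
    ∃ φ : K →+* ℝ, 1 ≤ φ (x : K) * φ (x : K) := by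
  have hxK : (x : K) ≠ 0 := by exact_mod_cast hx
  have hnorm : (1 : ℚ) ≤ |Algebra.norm ℚ (x : K)| := by
    have h0 : Algebra.norm ℚ (x : K) ≠ 0 := by
      rw [Algebra.norm_ne_zero_iff]; exact hxK
    obtain ⟨n, hn⟩ : ∃ n : ℤ, (n : ℚ) = Algebra.norm ℚ (x : K) :=
      ⟨Algebra.norm ℤ x, Algebra.coe_norm_int x⟩
    have hn0 : n ≠ 0 := by rintro rfl; rw [← hn] at h0; simp at h0
    rw [← hn]
    have := Int.one_le_abs hn0
    push_cast
    exact_mod_cast this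
  have hplace : ∃ w : InfinitePlace K, 1 ≤ w (x : K) := by
    by_contra hcon
    push_neg at hcon
    have h1 : ∏ w : InfinitePlace K, (w (x : K)) ^ w.mult < ∏ _w : InfinitePlace K, (1:ℝ) := by
      refine Finset.prod_lt_prod_of_nonempty ?_ ?_ Finset.univ_nonempty
      · intro w _
        exact pow_pos (InfinitePlace.pos_iff.mpr hxK) _
      · intro w _
        exact pow_lt_one₀ (le_of_lt (InfinitePlace.pos_iff.mpr hxK)) (hcon w)
          InfinitePlace.mult_ne_zero
    rw [InfinitePlace.prod_eq_abs_norm, Finset.prod_const_one] at h1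
    have h2 : (1 : ℝ) ≤ ((|Algebra.norm ℚ (x : K)| : ℚ) : ℝ) := by exact_mod_cast hnorm
    linarith
  obtain ⟨w, hw⟩ := hplace
  refine ⟨InfinitePlace.embedding_of_isReal (hK w), ?_⟩
  have h2 := InfinitePlace.norm_embedding_of_isReal (hK w) (x : K)
  have h3 : 1 ≤ |(InfinitePlace.embedding_of_isReal (hK w)) (x : K)| := by
    rw [← Real.norm_eq_abs, h2]; exact hw
  nlinarith [abs_nonneg ((InfinitePlace.embedding_of_isReal (hK w)) (x : K)),
    sq_abs ((InfinitePlace.embedding_of_isReal (hK w)) (x : K))]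

/-- The rank-one quadratic lattice `A⟨β⟩`. -/
noncomputable def idealForm (β : 𝓞 K) (A : Ideal (𝓞 K)) : QuadraticForm (𝓞 K) ↥A :=
  LinearMap.BilinMap.toQuadraticMap
  (LinearMap.mk₂ (𝓞 K) (fun x y : ↥A => β * (x : 𝓞 K) * (y : 𝓞 K))
    (fun x y z => by push_cast; ring)
    (fun c x y => by simp only [SetLike.val_smul, smul_eq_mul]; ring)
    (fun x y z => by push_cast; ring)
    (fun c x y => by simp only [SetLike.val_smul, smul_eq_mul]; ring))

lemma idealForm_apply (β : 𝓞 K) (A : Ideal (𝓞 K)) (x : ↥A) :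
    idealForm β A x = β * (x : 𝓞 K) * (x : 𝓞 K) := by
  simp [idealForm, LinearMap.BilinMap.toQuadraticMap_apply]

set_option maxHeartbeats 1000000 in
set_option synthInstance.maxHeartbeats 400000 in
/-- Key construction: glue `A⟨α+1⟩` onto the witness lattice. -/
theorem auxLat (hK : TotReal K) (S : Set (𝓞 K)) (hStp : ∀ a ∈ S, TPos a)
    (α : 𝓞 K) (hαS : α ∈ S) (L : QLat K) (hpos : L.PosDef)
    (hrep : ∀ a ∈ S, ¬ SRel α a → L.Rep a) (hnot : ¬ L.Rep α)
    (A : Ideal (𝓞 K)) (hA : A ≠ ⊥) :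
    ∃ L' : QLat K, L'.PosDef ∧ (∀ a ∈ S, ¬ SRel α a → L'.Rep a) ∧ ¬ L'.Rep α ∧
      Nonempty (L'.carrier ≃ₗ[𝓞 K] (L.carrier × ↥A)) := by
  classical
  have hα : TPos α := hStp α hαS
  set β : 𝓞 K := α + 1 with hβ
  have hβK : ((β : 𝓞 K) : K) = ((α : 𝓞 K) : K) + 1 := by rw [hβ]; push_cast; ring
  have hβpos : ∀ φ : K →+* ℝ, 0 < φ (β : K) := fun φ => by
    have h1 := hα φ
    rw [hβK, map_add, map_one]
    linarith
  haveI : Module.Finite (𝓞 K) ↥A := Module.Finite.iff_fg.mpr (IsNoetherian.noetherian A)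
  set Q' : QuadraticForm (𝓞 K) (L.carrier × ↥A) := L.Q.prod (idealForm β A) with hQdef
  have hQ' : ∀ (v : L.carrier) (x : ↥A),
      Q' (v, x) = L.Q v + β * (x : 𝓞 K) * (x : 𝓞 K) := by
    intro v x
    rw [hQdef]
    simp [QuadraticMap.prod_apply, idealForm_apply]
  haveI : NoZeroSMulDivisors (𝓞 K) (L.carrier × ↥A) := ⟨fun {c x} h => by
    by_cases hc : c = 0
    · exact Or.inl hc
    · exact Or.inr (Prod.ext ((smul_eq_zero.mp (congrArg Prod.fst h)).resolve_left hc)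
        ((smul_eq_zero.mp (congrArg Prod.snd h)).resolve_left hc))⟩
  refine ⟨⟨L.carrier × ↥A, Q'⟩, ?_, ?_, ?_, ⟨LinearEquiv.refl _ _⟩⟩
  · -- positive definite
    rintro ⟨v, x⟩ hvx φ
    show 0 < φ ((Q' (v, x) : 𝓞 K) : K)
    have hcast : ((L.Q v + β * (x : 𝓞 K) * (x : 𝓞 K) : 𝓞 K) : K)
        = ((L.Q v : 𝓞 K) : K) + (β : K) * ((x : 𝓞 K) : K) * ((x : 𝓞 K) : K) := by
      push_cast; ring
    rw [hQ' v x, hcast, map_add, map_mul, map_mul]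
    by_cases hv : v = 0
    · have hx : x ≠ 0 := by
        intro hx0
        exact hvx (by rw [hv, hx0]; rfl)
      have hxO : (x : 𝓞 K) ≠ 0 := fun h => hx (Subtype.ext (by simp [h]))
      have hxK : ((x : 𝓞 K) : K) ≠ 0 := fun h => hxO (by exact_mod_cast h)
      have hQ0 : L.Q v = 0 := by rw [hv]; exact QuadraticMap.map_zero L.Q
      rw [hQ0]
      have hφx : φ ((x : 𝓞 K) : K) ≠ 0 := fun h => hxK (φ.injective (by rw [h, map_zero]))
      have hb := hβpos φ
      have h2 : 0 < φ ((x : 𝓞 K) : K) * φ ((x : 𝓞 K) : K) := mul_self_pos.mpr hφx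
      push_cast
      simp only [map_zero]
      nlinarith [hb, h2]
    · have h1 := hpos v hv φ
      have h2 : 0 ≤ φ (β : K) * (φ ((x : 𝓞 K) : K) * φ ((x : 𝓞 K) : K)) :=
        mul_nonneg (le_of_lt (hβpos φ)) (mul_self_nonneg _)
      nlinarith
  · -- represents S \ [α]
    intro a ha hna
    obtain ⟨w, hw⟩ := hrep a ha hna
    refine ⟨(w, 0), ?_⟩
    show Q' (w, 0) = a
    rw [hQ' w 0]
    simp [hw]
  · -- does not represent α
    rintro ⟨⟨v, x⟩, hvx0⟩
    replace hvx : Q' (v, x) = α := hvx0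
    rw [hQ' v x] at hvx
    by_cases hx : x = 0
    · rw [hx] at hvx
      simp only [ZeroMemClass.coe_zero, mul_zero] at hvx
      rw [add_zero] at hvx
      exact hnot ⟨v, hvx⟩
    · have hx0 : (x : 𝓞 K) ≠ 0 := fun h => hx (Subtype.ext h)
      obtain ⟨φ, hφ⟩ := exists_embedding_sq_ge_one hK (x : 𝓞 K) hx0
      have h1 : ((L.Q v + β * (x : 𝓞 K) * (x : 𝓞 K) : 𝓞 K) : K) = (α : K) :=
        congrArg _ hvx
      have hcast : ((L.Q v + β * (x : 𝓞 K) * (x : 𝓞 K) : 𝓞 K) : K)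
          = ((L.Q v : 𝓞 K) : K) + (β : K) * ((x : 𝓞 K) : K) * ((x : 𝓞 K) : K) := by
        push_cast; ring
      rw [hcast] at h1
      have h2 := congrArg φ h1
      rw [map_add, map_mul, map_mul, hβK, map_add, map_one] at h2
      have hQv : 0 ≤ φ ((L.Q v : 𝓞 K) : K) := by
        by_cases hv : v = 0
        · rw [hv, QuadraticMap.map_zero]
          simp
        · exact le_of_lt (hpos v hv φ)
      have hαφ := hα φ
      nlinarith [hφ, hαφ, hQv, h2]
end NF

set_option maxHeartbeats 1000000 in
set_option synthInstance.maxHeartbeats 400000 in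
/-- if $α$ is $S$-critical, witnessed by a lattice $L$, then for every
ideal class of $K$ there is a witnessing lattice with Steinitz class in that ideal class;
in particular there is a free witnessing lattice. -/
theorem stmt19 {K : Type} [Field K] [NumberField K] (hK : TotReal K)
    (S : Set (𝓞 K)) (hStp : ∀ a ∈ S, TPos a)
    (α : 𝓞 K) (hαS : α ∈ S)
    (L : QLat K) (hpos : L.PosDef)
    (hrep : ∀ a ∈ S, ¬ SRel α a → L.Rep a) (hnot : ¬ L.Rep α) :
    (∀ c : ClassGroup (𝓞 K), ∃ L' : QLat K, L'.PosDef ∧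
      (∀ a ∈ S, ¬ SRel α a → L'.Rep a) ∧ ¬ L'.Rep α ∧ L'.HasSteinitz c) ∧
    (∃ L' : QLat K, Module.Free (𝓞 K) L'.carrier ∧ L'.PosDef ∧
      (∀ a ∈ S, ¬ SRel α a → L'.Rep a) ∧ ¬ L'.Rep α) := by
  classical
  have hmain : ∀ c : ClassGroup (𝓞 K), ∃ L' : QLat K, L'.PosDef ∧
      (∀ a ∈ S, ¬ SRel α a → L'.Rep a) ∧ ¬ L'.Rep α ∧ L'.HasSteinitz c := by
    intro c
    rcases isGood_of_fg (R := 𝓞 K) L.carrier with hsub | ⟨k, J, hJ, ⟨eM⟩⟩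
    · obtain ⟨A0, hA⟩ := ClassGroup.mk0_surjective c
      have hA0 : (A0 : Ideal (𝓞 K)) ≠ ⊥ := by
        have h := mem_nonZeroDivisors_iff_ne_zero.mp A0.2
        simpa using h
      obtain ⟨L', h1, h2, h3, ⟨e⟩⟩ := auxLat hK S hStp α hαS L hpos hrep hnot A0 hA0
      refine ⟨L', h1, h2, h3, 0, A0, hA, ⟨e ≪≫ₗ ?_⟩⟩
      haveI := hsub
      exact prodSubsingletonEquiv ≪≫ₗ
        (prodSubsingletonEquiv (A := Fin 0 → 𝓞 K) (B := ↥(A0 : Ideal (𝓞 K)))).symm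
    · set J0 : (Ideal (𝓞 K))⁰ := ⟨J, mem_nonZeroDivisors_iff_ne_zero.mpr (by simpa using hJ)⟩
        with hJ0
      obtain ⟨A0, hA⟩ := ClassGroup.mk0_surjective (c * (ClassGroup.mk0 J0)⁻¹)
      have hA0 : (A0 : Ideal (𝓞 K)) ≠ ⊥ := by
        have h := mem_nonZeroDivisors_iff_ne_zero.mp A0.2
        simpa using h
      obtain ⟨L', h1, h2, h3, ⟨e⟩⟩ := auxLat hK S hStp α hαS L hpos hrep hnot A0 hA0
      obtain ⟨eB⟩ := prod_equiv_mul J (A0 : Ideal (𝓞 K)) hJ hA0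
      refine ⟨L', h1, h2, h3, k + 1, J0 * A0, ?_, ⟨?_⟩⟩
      · rw [map_mul, hA, mul_comm (ClassGroup.mk0 J0), mul_assoc, inv_mul_cancel, mul_one]
      · exact e ≪≫ₗ (eM.prodCongr (LinearEquiv.refl _ _)) ≪≫ₗ
          LinearEquiv.prodAssoc _ _ _ _ ≪≫ₗ
          ((LinearEquiv.refl _ (Fin k → 𝓞 K)).prodCongr eB) ≪≫ₗ
          (LinearEquiv.prodAssoc _ _ _ _).symm ≪≫ₗ
          ((finSuccArrowEquiv k).prodCongr (LinearEquiv.refl _ _))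
  refine ⟨hmain, ?_⟩
  obtain ⟨L', h1, h2, h3, k, I, hmk, ⟨e⟩⟩ := hmain 1
  have hprin : Submodule.IsPrincipal (I : Ideal (𝓞 K)) :=
    (ClassGroup.mk0_eq_one_iff I.2).mp hmk
  obtain ⟨g, hg⟩ := hprin.principal
  have hIb : (I : Ideal (𝓞 K)) ≠ ⊥ := by
    simpa using mem_nonZeroDivisors_iff_ne_zero.mp I.2
  have hg0 : g ≠ 0 := by
    rintro rfl
    apply hIb
    rw [hg]; simp
  have eI : ↥(I : Ideal (𝓞 K)) ≃ₗ[𝓞 K] 𝓞 K :=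
    LinearEquiv.ofEq _ _ hg ≪≫ₗ (spanSingletonEquiv g hg0).symm
  refine ⟨L', ?_, h1, h2, h3⟩
  have efree : L'.carrier ≃ₗ[𝓞 K] ((Fin k → 𝓞 K) × 𝓞 K) :=
    e ≪≫ₗ (LinearEquiv.refl _ _).prodCongr eI
  exact Module.Free.of_equiv efree.symm
end Structure
end
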